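/- The adaptive conformal inference (online quantile tracking) iteration satisfies the long-run coverage bound |(1/T)·Σ_{t=1}^T err_t − α| ≤ 2(M + η)/(η·T) for every T ≥ 1; in particular the empirical miscoverage converges to α as T → ∞. -/

import Mathlib

open Finset

/-- Adaptive conformal inference (online quantile tracking):
`err t = 1{s t > q t}` and `q (t+1) = q t + η (err t - α)`,
initialized with `q 1 ∈ [-(M+η), M+η]`. -/
theorem aci_stmt_7
    (α η M : ℝ) (hα0 : 0 < α) (hα1 : α < 1) (hη : 0 < η) (hM : 0 ≤ M)
    (s : ℕ → ℝ) (hs : ∀ t, 1 ≤ t → |s t| ≤ M)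
    (err q : ℕ → ℝ)
    (herr : ∀ t, 1 ≤ t → err t = if q t < s t then 1 else 0)
    (hupd : ∀ t, 1 ≤ t → q (t + 1) = q t + η * (err t - α))
    (hq1 : q 1 ∈ Set.Icc (-(M + η)) (M + η))
    :
    (∀ T : ℕ, 1 ≤ T →
      |(1 / (T : ℝ)) * ∑ t ∈ Finset.Icc 1 T, err t - α| ≤ 2 * (M + η) / (η * T)) ∧
    Filter.Tendsto (fun T : ℕ => (1 / (T : ℝ)) * ∑ t ∈ Finset.Icc 1 T, err t)
      Filter.atTop (nhds α) := by
  -- boundedness of q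
  have hbound : ∀ t : ℕ, 1 ≤ t → |q t| ≤ M + η := by
    intro t ht
    induction t with
    | zero => omega
    | succ n ih =>
      rcases Nat.lt_or_ge n 1 with hn | hn
      · interval_cases n
        rw [abs_le]; exact ⟨hq1.1, hq1.2⟩
      · have hb := ih hn
        rw [abs_le] at hb ⊢
        have hsn := hs n hn
        rw [abs_le] at hsn
        rw [hupd n hn, herr n hn]
        by_cases hc : q n < s n
        · simp only [if_pos hc]
          constructor
          · nlinarith [hb.1]
          · nlinarith [hsn.2]
        · simp only [if_neg hc]
          push_neg at hc
          constructor
          · nlinarith [hsn.1]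
          · nlinarith [hb.2]
  -- telescoping
  have htel : ∀ T : ℕ, 1 ≤ T →
      q (T + 1) = q 1 + η * (∑ t ∈ Finset.Icc 1 T, err t - T * α) := by
    intro T hT
    induction T with
    | zero => omega
    | succ n ih =>
      rcases Nat.lt_or_ge n 1 with hn | hn
      · interval_cases n
        rw [hupd 1 le_rfl]
        simp only [Finset.Icc_self, Finset.sum_singleton, Nat.cast_one]
        ring
      · have := ih hn
        rw [hupd (n+1) (by omega), this,
          Finset.sum_Icc_succ_top (by omega : 1 ≤ n + 1)]
        push_cast
        ring
  -- main bound
  have hmain : ∀ T : ℕ, 1 ≤ T →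
      |(1 / (T : ℝ)) * ∑ t ∈ Finset.Icc 1 T, err t - α| ≤ 2 * (M + η) / (η * T) := by
    intro T hT
    have hTpos : (0 : ℝ) < T := by exact_mod_cast hT
    have h1 := hbound (T + 1) (by omega)
    have h2 := hbound 1 le_rfl
    have h3 := htel T hT
    have hsum : |(∑ t ∈ Finset.Icc 1 T, err t) - T * α| ≤ 2 * (M + η) / η := by
      have : (∑ t ∈ Finset.Icc 1 T, err t) - T * α = (q (T + 1) - q 1) / η := by
        rw [h3]; field_simp; ring
      rw [this, abs_div, abs_of_pos hη]
      gcongr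
      calc |q (T + 1) - q 1| ≤ |q (T+1)| + |q 1| := abs_sub _ _
        _ ≤ 2 * (M + η) := by linarith
    have heq : (1 / (T : ℝ)) * ∑ t ∈ Finset.Icc 1 T, err t - α
        = ((∑ t ∈ Finset.Icc 1 T, err t) - T * α) / T := by
      field_simp
    rw [heq, abs_div, abs_of_pos hTpos]
    rw [div_le_div_iff₀ hTpos (by positivity)]
    calc |(∑ t ∈ Finset.Icc 1 T, err t) - T * α| * (η * T)
        ≤ (2 * (M + η) / η) * (η * T) := by gcongr
      _ = 2 * (M + η) * T := by field_simp
  refine ⟨hmain, ?_⟩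
  -- tendsto
  rw [tendsto_iff_dist_tendsto_zero]
  have hC : Filter.Tendsto (fun T : ℕ => 2 * (M + η) / (η * T)) Filter.atTop (nhds 0) := by
    have : (fun T : ℕ => 2 * (M + η) / (η * T))
        = fun T : ℕ => (2 * (M + η) / η) * (1 / T) := by
      funext T; field_simp
    rw [this]
    simpa using (tendsto_one_div_atTop_nhds_zero_nat).const_mul (2 * (M + η) / η)
  refine squeeze_zero' (Filter.Eventually.of_forall (fun T => dist_nonneg)) ?_ hC
  filter_upwards [Filter.eventually_ge_atTop 1] with T hT
  simpa [Real.dist_eq] using hmain T hT
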